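/- Let n ≥ 1 and let ‖·‖₁, ‖·‖₂, ‖·‖₃, ‖·‖₄ be norms on ℂⁿ. The generalized induced norms satisfy ‖A‖_{1,2} = ‖A‖_{3,4} for all A ∈ M_n if and only if there exists γ > 0 such that ‖x‖₁ = γ‖x‖₃ and ‖x‖₂ = γ‖x‖₄ for all x ∈ ℂⁿ. -/

import Mathlib

open Matrix

/-- `ν` is a norm on `ℂⁿ`. -/
def IsNormCn {n : ℕ} (ν : (Fin n → ℂ) → ℝ) : Prop :=
  (∀ x, ν x = 0 ↔ x = 0) ∧
  (∀ (c : ℂ) (x), ν (c • x) = ‖c‖ * ν x) ∧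
  (∀ x y, ν (x + y) ≤ ν x + ν y)

/-- `N` is a norm on the n×n complex matrices. -/
def IsNormMn {n : ℕ} (N : Matrix (Fin n) (Fin n) ℂ → ℝ) : Prop :=
  (∀ A, N A = 0 ↔ A = 0) ∧
  (∀ (c : ℂ) (A), N (c • A) = ‖c‖ * N A) ∧
  (∀ A B, N (A + B) ≤ N A + N B)

/-- `N` is a minimal norm on `M_n`: any norm dominated by `N` equals `N`. -/
def IsMinimalNorm {n : ℕ} (N : Matrix (Fin n) (Fin n) ℂ → ℝ) : Prop :=
  ∀ N' : Matrix (Fin n) (Fin n) ℂ → ℝ,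
    IsNormMn N' → (∀ A, N' A ≤ N A) → ∀ A, N' A = N A

/-- The generalized induced norm `‖A‖_{1,2} = max{‖Ax‖₂ : ‖x‖₁ = 1}`. -/
noncomputable def gind {n : ℕ} (ν₁ ν₂ : (Fin n → ℂ) → ℝ)
    (A : Matrix (Fin n) (Fin n) ℂ) : ℝ :=
  sSup {r : ℝ | ∃ x : Fin n → ℂ, ν₁ x = 1 ∧ r = ν₂ (A.mulVec x)}

/-- `C_x`: the matrix all of whose columns equal `x`, i.e. `y ↦ (∑ j, y j) • x`. -/
def Cmat {n : ℕ} (x : Fin n → ℂ) : Matrix (Fin n) (Fin n) ℂ :=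
  Matrix.of fun i _ => x i

/-! ### Auxiliary machinery -/

/-- Type synonym for `ℂⁿ` carrying the norm `ν`. -/
def NV (n : ℕ) (ν : (Fin n → ℂ) → ℝ) (_h : IsNormCn ν) : Type := Fin n → ℂ

variable {n : ℕ} {ν : (Fin n → ℂ) → ℝ} {h : IsNormCn ν}

noncomputable instance : AddCommGroup (NV n ν h) := inferInstanceAs (AddCommGroup (Fin n → ℂ))
noncomputable instance : Module ℂ (NV n ν h) := inferInstanceAs (Module ℂ (Fin n → ℂ))

lemma nv_nonneg (h : IsNormCn ν) (x : Fin n → ℂ) : 0 ≤ ν x := by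
  have h0 : ν 0 = 0 := (h.1 0).mpr rfl
  have ht := h.2.2 x (-x)
  have hneg : ν (-x) = ν x := by simpa using h.2.1 (-1) x
  have hxx : x + -x = (0 : Fin n → ℂ) := by simp
  rw [hxx, h0, hneg] at ht
  linarith

lemma nv_pos (h : IsNormCn ν) {x : Fin n → ℂ} (hx : x ≠ 0) : 0 < ν x :=
  lt_of_le_of_ne (nv_nonneg h x) (fun e => hx ((h.1 x).mp e.symm))

noncomputable instance : NormedAddCommGroup (NV n ν h) :=
  AddGroupNorm.toNormedAddCommGroup
  { toFun := ν
    map_zero' := (h.1 0).mpr rfl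
    add_le' := h.2.2
    neg' := fun x => by
      have := fun y : Fin n → ℂ => (by simpa using h.2.1 (-1) y : ν (-y) = ν y)
      exact this x
    eq_zero_of_map_eq_zero' := fun x hx => (h.1 x).mp hx }

noncomputable instance : NormedSpace ℂ (NV n ν h) := ⟨fun c x => le_of_eq (h.2.1 c x)⟩

instance : FiniteDimensional ℂ (NV n ν h) := inferInstanceAs (FiniteDimensional ℂ (Fin n → ℂ))

lemma nv_norm (x : NV n ν h) : ‖x‖ = ν x := rfl

/-- The operator norm of a linear functional with respect to the norm `ν`. -/
noncomputable def opn (ν : (Fin n → ℂ) → ℝ) (h : IsNormCn ν) (f : (Fin n → ℂ) →ₗ[ℂ] ℂ) : ℝ :=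
  ‖LinearMap.toContinuousLinearMap (show NV n ν h →ₗ[ℂ] ℂ from f)‖

lemma opn_nonneg (h : IsNormCn ν) (f : (Fin n → ℂ) →ₗ[ℂ] ℂ) : 0 ≤ opn ν h f := norm_nonneg _

lemma le_opn (h : IsNormCn ν) (f : (Fin n → ℂ) →ₗ[ℂ] ℂ) (x : Fin n → ℂ) :
    ‖f x‖ ≤ opn ν h f * ν x := by
  have := (LinearMap.toContinuousLinearMap (show NV n ν h →ₗ[ℂ] ℂ from f)).le_opNorm
    (show NV n ν h from x)
  exact this

lemma opn_le (h : IsNormCn ν) (f : (Fin n → ℂ) →ₗ[ℂ] ℂ) {M : ℝ} (hM : 0 ≤ M)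
    (hb : ∀ x, ‖f x‖ ≤ M * ν x) : opn ν h f ≤ M :=
  ContinuousLinearMap.opNorm_le_bound _ hM (fun x => hb x)

lemma opn_pos (h : IsNormCn ν) (f : (Fin n → ℂ) →ₗ[ℂ] ℂ) {x : Fin n → ℂ}
    (hx : f x ≠ 0) : 0 < opn ν h f := by
  have h1 : 0 < ‖f x‖ := norm_pos_iff.mpr hx
  have h2 := le_opn h f x
  have hx0 : x ≠ 0 := by rintro rfl; simp at hx
  have h3 := nv_pos h hx0
  nlinarith [opn_nonneg h f]

lemma lin_apply (f : (Fin n → ℂ) →ₗ[ℂ] ℂ) (x : Fin n → ℂ) :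
    f x = ∑ i, x i • f (Pi.single i 1) := by
  rw [LinearMap.pi_apply_eq_sum_univ f x]
  refine Finset.sum_congr rfl fun i _ => ?_
  congr 2
  funext j
  simp [Pi.single_apply, eq_comm]

/-- The rank-one matrix `x ↦ f x • v`. -/
noncomputable def rk1 {n : ℕ} (f : (Fin n → ℂ) →ₗ[ℂ] ℂ) (v : Fin n → ℂ) :
    Matrix (Fin n) (Fin n) ℂ := Matrix.of fun i j => f (Pi.single j 1) * v i

lemma rk1_mulVec (f : (Fin n → ℂ) →ₗ[ℂ] ℂ) (v x : Fin n → ℂ) :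
    (rk1 f v).mulVec x = f x • v := by
  funext i
  show ∑ j, (f (Pi.single j 1) * v i) * x j = f x * v i
  rw [lin_apply f x, Finset.sum_mul]
  refine Finset.sum_congr rfl fun j _ => ?_
  simp only [smul_eq_mul]
  ring

lemma exists_unit (h : IsNormCn ν) (hn : 1 ≤ n) : ∃ x : Fin n → ℂ, ν x = 1 := by
  set e : Fin n → ℂ := Pi.single (⟨0, hn⟩ : Fin n) 1 with he
  have hne : e ≠ 0 := by
    intro hcon
    have := congrFun hcon ⟨0, hn⟩
    simp [he] at this
  have hp := nv_pos h hne
  refine ⟨(((ν e)⁻¹ : ℝ) : ℂ) • e, ?_⟩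
  rw [h.2.1]
  rw [Complex.norm_real, Real.norm_eq_abs, abs_of_pos (by positivity)]
  field_simp

lemma unit_smul (h : IsNormCn ν) {x : Fin n → ℂ} (hx : x ≠ 0) :
    ν ((((ν x)⁻¹ : ℝ) : ℂ) • x) = 1 := by
  have hp := nv_pos h hx
  rw [h.2.1, Complex.norm_real, Real.norm_eq_abs, abs_of_pos (by positivity)]
  field_simp

lemma gind_rk1 (hn : 1 ≤ n) {ν₁ ν₂ : (Fin n → ℂ) → ℝ}
    (h₁ : IsNormCn ν₁) (h₂ : IsNormCn ν₂)
    (f : (Fin n → ℂ) →ₗ[ℂ] ℂ) (v : Fin n → ℂ) :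
    gind ν₁ ν₂ (rk1 f v) = opn ν₁ h₁ f * ν₂ v := by
  have hset : {r : ℝ | ∃ x : Fin n → ℂ, ν₁ x = 1 ∧ r = ν₂ ((rk1 f v).mulVec x)}
      = {r : ℝ | ∃ x : Fin n → ℂ, ν₁ x = 1 ∧ r = ‖f x‖ * ν₂ v} := by
    ext r
    constructor
    · rintro ⟨x, hx, rfl⟩
      exact ⟨x, hx, by rw [rk1_mulVec, h₂.2.1]⟩
    · rintro ⟨x, hx, rfl⟩
      exact ⟨x, hx, by rw [rk1_mulVec, h₂.2.1]⟩
  rw [gind, hset]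
  set S := {r : ℝ | ∃ x : Fin n → ℂ, ν₁ x = 1 ∧ r = ‖f x‖ * ν₂ v} with hS
  obtain ⟨x₀, hx₀⟩ := exists_unit h₁ hn
  have hmem₀ : (‖f x₀‖ * ν₂ v) ∈ S := ⟨x₀, hx₀, rfl⟩
  have hub : ∀ r ∈ S, r ≤ opn ν₁ h₁ f * ν₂ v := by
    rintro r ⟨x, hx, rfl⟩
    have := le_opn h₁ f x
    rw [hx, mul_one] at this
    exact mul_le_mul_of_nonneg_right this (nv_nonneg h₂ v)
  have hbdd : BddAbove S := ⟨_, hub⟩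
  have hsup_nn : 0 ≤ sSup S :=
    le_trans (mul_nonneg (norm_nonneg _) (nv_nonneg h₂ v)) (le_csSup hbdd hmem₀)
  refine le_antisymm (csSup_le ⟨_, hmem₀⟩ hub) ?_
  rcases eq_or_lt_of_le (nv_nonneg h₂ v) with hv | hv
  · rw [← hv, mul_zero]; exact hsup_nn
  · have hM : (0:ℝ) ≤ sSup S / ν₂ v := div_nonneg hsup_nn hv.le
    have hopn : opn ν₁ h₁ f ≤ sSup S / ν₂ v := by
      refine opn_le h₁ f hM fun x => ?_
      by_cases hx : x = 0
      · simp [hx, (h₁.1 0).mpr rfl]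
      · have hp := nv_pos h₁ hx
        set u : Fin n → ℂ := (((ν₁ x)⁻¹ : ℝ) : ℂ) • x with hu
        have hu1 : ν₁ u = 1 := unit_smul h₁ hx
        have hmemu : (‖f u‖ * ν₂ v) ∈ S := ⟨u, hu1, rfl⟩
        have hle : ‖f u‖ * ν₂ v ≤ sSup S := le_csSup hbdd hmemu
        have hfu : ‖f u‖ = (ν₁ x)⁻¹ * ‖f x‖ := by
          rw [hu, _root_.map_smul, norm_smul, Complex.norm_real, Real.norm_eq_abs,
            abs_of_pos (by positivity)]
        have : ‖f u‖ ≤ sSup S / ν₂ v := (le_div_iff₀ hv).mpr hle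
        rw [hfu] at this
        calc ‖f x‖ = ν₁ x * ((ν₁ x)⁻¹ * ‖f x‖) := by field_simp
          _ ≤ ν₁ x * (sSup S / ν₂ v) := by
              exact mul_le_mul_of_nonneg_left this hp.le
          _ = sSup S / ν₂ v * ν₁ x := by ring
    calc opn ν₁ h₁ f * ν₂ v ≤ (sSup S / ν₂ v) * ν₂ v :=
          mul_le_mul_of_nonneg_right hopn hv.le
      _ = sSup S := by field_simp

theorem gind_eq_iff (n : ℕ) (hn : 1 ≤ n)
    (ν₁ ν₂ ν₃ ν₄ : (Fin n → ℂ) → ℝ)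
    (h₁ : IsNormCn ν₁) (h₂ : IsNormCn ν₂) (h₃ : IsNormCn ν₃) (h₄ : IsNormCn ν₄) :
    (∀ A : Matrix (Fin n) (Fin n) ℂ, gind ν₁ ν₂ A = gind ν₃ ν₄ A) ↔
      ∃ γ : ℝ, 0 < γ ∧
        (∀ x : Fin n → ℂ, ν₁ x = γ * ν₃ x) ∧ (∀ x : Fin n → ℂ, ν₂ x = γ * ν₄ x) := by
  constructor
  · intro H
    have key : ∀ (f : (Fin n → ℂ) →ₗ[ℂ] ℂ) (v : Fin n → ℂ),
        opn ν₁ h₁ f * ν₂ v = opn ν₃ h₃ f * ν₄ v := by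
      intro f v
      have := H (rk1 f v)
      rwa [gind_rk1 hn h₁ h₂, gind_rk1 hn h₃ h₄] at this
    set i0 : Fin n := ⟨0, hn⟩ with hi0
    set f₀ : (Fin n → ℂ) →ₗ[ℂ] ℂ := LinearMap.proj i0 with hf₀def
    have hf₀ : f₀ (Pi.single i0 1) ≠ 0 := by simp [hf₀def]
    have hop1 : 0 < opn ν₁ h₁ f₀ := opn_pos h₁ f₀ hf₀
    have hop3 : 0 < opn ν₃ h₃ f₀ := opn_pos h₃ f₀ hf₀
    set γ : ℝ := opn ν₃ h₃ f₀ / opn ν₁ h₁ f₀ with hγdef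
    have hγ : 0 < γ := div_pos hop3 hop1
    have hB : ∀ v : Fin n → ℂ, ν₂ v = γ * ν₄ v := by
      intro v
      have hk := key f₀ v
      rw [hγdef]
      field_simp
      linear_combination hk
    set v₀ : Fin n → ℂ := Pi.single i0 1 with hv₀def
    have hv₀ : v₀ ≠ 0 := by
      intro hcon
      have := congrFun hcon i0
      simp [hv₀def] at this
    have hν₄v₀ : 0 < ν₄ v₀ := nv_pos h₄ hv₀
    have hopns : ∀ f : (Fin n → ℂ) →ₗ[ℂ] ℂ, opn ν₃ h₃ f = γ * opn ν₁ h₁ f := by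
      intro f
      have hk := key f v₀
      rw [hB v₀] at hk
      have h' := mul_right_cancel₀ hν₄v₀.ne'
        (show (opn ν₁ h₁ f * γ) * ν₄ v₀ = opn ν₃ h₃ f * ν₄ v₀ by linear_combination hk)
      linear_combination -h'
    have hA : ∀ x : Fin n → ℂ, ν₁ x = γ * ν₃ x := by
      intro x
      by_cases hx : x = 0
      · simp [hx, (h₁.1 0).mpr rfl, (h₃.1 0).mpr rfl]
      · -- supporting functional w.r.t. ν₁
        obtain ⟨g, hg1, hgx⟩ := exists_dual_vector ℂ (show NV n ν₁ h₁ from x)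
          (by exact fun e => hx ((h₁.1 x).mp e))
        set fg : (Fin n → ℂ) →ₗ[ℂ] ℂ := (show (Fin n → ℂ) →ₗ[ℂ] ℂ from g.toLinearMap)
          with hfgdef
        have hopg : opn ν₁ h₁ fg = 1 := by
          have heq : (LinearMap.toContinuousLinearMap (show NV n ν₁ h₁ →ₗ[ℂ] ℂ from fg)) = g :=
            ContinuousLinearMap.ext fun y => rfl
          rw [opn, heq, hg1]
        have hval : ν₁ x = ‖fg x‖ := by
          have : fg x = ((ν₁ x : ℝ) : ℂ) := hgx
          rw [this, Complex.norm_real, Real.norm_eq_abs, abs_of_nonneg (nv_nonneg h₁ x)]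
        have hle : ν₁ x ≤ γ * ν₃ x := by
          have := le_opn h₃ fg x
          rw [hopns fg, hopg, mul_one] at this
          rw [hval]; exact this
        -- supporting functional w.r.t. ν₃
        obtain ⟨g', hg1', hgx'⟩ := exists_dual_vector ℂ (show NV n ν₃ h₃ from x)
          (by exact fun e => hx ((h₃.1 x).mp e))
        set fg' : (Fin n → ℂ) →ₗ[ℂ] ℂ := (show (Fin n → ℂ) →ₗ[ℂ] ℂ from g'.toLinearMap)
          with hfg'def
        have hopg' : opn ν₃ h₃ fg' = 1 := by
          have heq : (LinearMap.toContinuousLinearMap (show NV n ν₃ h₃ →ₗ[ℂ] ℂ from fg')) = g' :=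
            ContinuousLinearMap.ext fun y => rfl
          rw [opn, heq, hg1']
        have hopg1' : opn ν₁ h₁ fg' = γ⁻¹ := by
          have h6 := hopns fg'
          rw [hopg'] at h6
          field_simp
          linear_combination -h6
        have hval' : ν₃ x = ‖fg' x‖ := by
          have : fg' x = ((ν₃ x : ℝ) : ℂ) := hgx'
          rw [this, Complex.norm_real, Real.norm_eq_abs, abs_of_nonneg (nv_nonneg h₃ x)]
        have hge : γ * ν₃ x ≤ ν₁ x := by
          have := le_opn h₁ fg' x
          rw [hopg1'] at this
          rw [hval'] at *
          calc γ * ‖fg' x‖ ≤ γ * (γ⁻¹ * ν₁ x) :=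
                mul_le_mul_of_nonneg_left this hγ.le
            _ = ν₁ x := by field_simp
        exact le_antisymm hle hge
    exact ⟨γ, hγ, hA, hB⟩
  · rintro ⟨γ, hγ, hA, hB⟩ A
    unfold gind
    congr 1
    ext r
    constructor
    · rintro ⟨x, hx, rfl⟩
      refine ⟨((γ : ℝ) : ℂ) • x, ?_, ?_⟩
      · rw [h₃.2.1, Complex.norm_real, Real.norm_eq_abs, abs_of_pos hγ]
        have hAx := hA x
        rw [hx] at hAx
        linarith
      · rw [Matrix.mulVec_smul, h₄.2.1, Complex.norm_real, Real.norm_eq_abs,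
          abs_of_pos hγ, ← hB]
    · rintro ⟨y, hy, rfl⟩
      refine ⟨(((γ : ℝ) : ℂ))⁻¹ • y, ?_, ?_⟩
      · rw [hA, h₃.2.1]
        rw [norm_inv, Complex.norm_real, Real.norm_eq_abs, abs_of_pos hγ, hy]
        field_simp
      · rw [Matrix.mulVec_smul, hB, h₄.2.1]
        rw [norm_inv, Complex.norm_real, Real.norm_eq_abs, abs_of_pos hγ]
        field_simp
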